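/- Let j ≠ k be fixed indices, and let t ↦ G(t) be a family of symmetric invertible m×m real matrices, differentiable at t₀, whose derivative at t₀ is E_{jk} + E_{kj} (the matrix with ones in entries (j,k) and (k,j) and zeros elsewhere). Let t ↦ c(t) be a real function, positive and differentiable at t₀, and define σ(t) = c(t)·G(t)^{-1}·𝟙. Then for each index i, σ_i is differentiable at t₀ with derivative σ_i'(t₀) = −(G(t₀)^{-1})_{ik}·σ_j(t₀) − (G(t₀)^{-1})_{ij}·σ_k(t₀) + (c'(t₀)/c(t₀))·σ_i(t₀). -/

import Mathlib

open Matrix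

/-- comparative statics of equity centrality. If `t ↦ G(t)` is a family of
symmetric invertible matrices whose entrywise derivative at `t₀` is `E_{jk} + E_{kj}`,
`c` is positive and differentiable at `t₀`, and `σ(t) = c(t)·G(t)⁻¹·𝟙`, then
`σ_i'(t₀) = −(G(t₀)⁻¹)_{ik}·σ_j(t₀) − (G(t₀)⁻¹)_{ij}·σ_k(t₀) + (c'(t₀)/c(t₀))·σ_i(t₀)`. -/
theorem statement_17 {m : ℕ} (j k : Fin m) (hjk : j ≠ k)
    (G : ℝ → Matrix (Fin m) (Fin m) ℝ) (t₀ : ℝ)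
    (hG_symm : ∀ t, (G t).IsSymm)
    (hG_inv : ∀ t, IsUnit (G t))
    (hG_deriv : ∀ a b, HasDerivAt (fun t => G t a b)
      ((Matrix.single j k (1 : ℝ) + Matrix.single k j (1 : ℝ)) a b) t₀)
    (c : ℝ → ℝ) (hc_pos : 0 < c t₀) (c' : ℝ) (hc : HasDerivAt c c' t₀)
    (σ : ℝ → Fin m → ℝ)
    (hσ : ∀ t, σ t = c t • (G t)⁻¹.mulVec (fun _ => (1 : ℝ))) :
    ∀ i, HasDerivAt (fun t => σ t i)
      (-(G t₀)⁻¹ i k * σ t₀ j - (G t₀)⁻¹ i j * σ t₀ k + c' / c t₀ * σ t₀ i) t₀ := by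
  intro i
  letI : NormedRing (Matrix (Fin m) (Fin m) ℝ) := Matrix.linftyOpNormedRing
  letI : NormedAlgebra ℝ (Matrix (Fin m) (Fin m) ℝ) := Matrix.linftyOpNormedAlgebra
  haveI : CompleteSpace (Matrix (Fin m) (Fin m) ℝ) := FiniteDimensional.complete ℝ _
  set E : Matrix (Fin m) (Fin m) ℝ :=
    Matrix.single j k (1 : ℝ) + Matrix.single k j (1 : ℝ) with hE
  set A : Matrix (Fin m) (Fin m) ℝ := (G t₀)⁻¹ with hA
  -- matrix-valued derivative of G
  have hG : HasDerivAt G E t₀ := by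
    have h1 : HasDerivAt (fun t => ∑ a : Fin m, ∑ b : Fin m,
        Matrix.single a b (G t a b))
        (∑ a : Fin m, ∑ b : Fin m, Matrix.single a b (E a b)) t₀ := by
      refine HasDerivAt.fun_sum fun a _ => HasDerivAt.fun_sum fun b _ => ?_
      have := (hG_deriv a b).smul_const (Matrix.single a b (1 : ℝ))
      simpa [Matrix.smul_single, smul_eq_mul] using this
    have e1 : (fun t => ∑ a : Fin m, ∑ b : Fin m, Matrix.single a b (G t a b)) = G := by
      funext t; exact (Matrix.matrix_eq_sum_single (G t)).symm
    have e2 : (∑ a : Fin m, ∑ b : Fin m, Matrix.single a b (E a b)) = E :=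
      (Matrix.matrix_eq_sum_single E).symm
    rwa [e1, e2] at h1
  -- derivative of the inverse
  obtain ⟨u, hu⟩ := hG_inv t₀
  have huinv : (↑u⁻¹ : Matrix (Fin m) (Fin m) ℝ) = A := by
    rw [hA, Matrix.nonsing_inv_eq_ringInverse, ← hu, Ring.inverse_unit]
  have hG0 : G t₀ = ↑u := hu.symm
  have hinv : HasDerivAt (fun t => Ring.inverse (G t)) (-(A * E * A)) t₀ := by
    have h0 := hasFDerivAt_ringInverse (𝕜 := ℝ) u
    rw [hu] at h0
    have := h0.comp_hasDerivAt t₀ hG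
    simp only [Function.comp_def, huinv, ContinuousLinearMap.mulLeftRight_apply, neg_mul, mul_neg, neg_neg] at this
    exact this
  have hinv' : HasDerivAt (fun t => (G t)⁻¹) (-(A * E * A)) t₀ := by
    simpa [Matrix.nonsing_inv_eq_ringInverse] using hinv
  -- entrywise derivative of the inverse
  have hent : ∀ a b, HasDerivAt (fun t => (G t)⁻¹ a b) ((-(A * E * A)) a b) t₀ := by
    intro a b
    have φ := LinearMap.toContinuousLinearMap (Matrix.entryLinearMap ℝ ℝ a b :
      Matrix (Fin m) (Fin m) ℝ →ₗ[ℝ] ℝ)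
    exact (LinearMap.toContinuousLinearMap
      (Matrix.entryLinearMap ℝ ℝ a b)).hasFDerivAt.comp_hasDerivAt t₀ hinv'
  -- sum over rows
  have hS : ∀ a, HasDerivAt (fun t => ∑ b : Fin m, (G t)⁻¹ a b)
      (∑ b : Fin m, (-(A * E * A)) a b) t₀ :=
    fun a => HasDerivAt.fun_sum fun b _ => hent a b
  -- σ entrywise
  have hσi : ∀ t a, σ t a = c t * ∑ b : Fin m, (G t)⁻¹ a b := by
    intro t a
    rw [hσ t]
    simp [Matrix.mulVec, dotProduct, smul_eq_mul]
  -- value of the entry sums of the derivative matrix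
  have hrow : ∀ a, (∑ b : Fin m, (-(A * E * A)) a b) =
      -(A a j * ∑ b : Fin m, A k b) - A a k * ∑ b : Fin m, A j b := by
    intro a
    have key : ∀ b, (A * E * A) a b = A a j * A k b + A a k * A j b := by
      intro b
      rw [hE, Matrix.mul_add, Matrix.add_mul, Matrix.add_apply]
      congr 1 <;>
      · rw [Matrix.mul_apply]
        simp [Matrix.mul_apply, Matrix.single, Finset.mul_sum, mul_ite, ite_mul,
          ite_and, Finset.sum_ite_eq, Finset.sum_ite_eq']
    simp only [Matrix.neg_apply, key, neg_add]
    rw [Finset.sum_add_distrib, Finset.sum_neg_distrib, Finset.sum_neg_distrib,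
      ← Finset.mul_sum, ← Finset.mul_sum]
    ring
  -- assemble
  have hmain : HasDerivAt (fun t => σ t i)
      (c' * (∑ b : Fin m, A i b) + c t₀ * (∑ b : Fin m, (-(A * E * A)) i b)) t₀ := by
    have h2 := hc.mul (hS i)
    exact h2.congr_of_eventuallyEq (Filter.Eventually.of_forall fun t => hσi t i)
  have hcne : c t₀ ≠ 0 := ne_of_gt hc_pos
  have hval : c' * (∑ b : Fin m, A i b) + c t₀ * (∑ b : Fin m, (-(A * E * A)) i b)
      = -(G t₀)⁻¹ i k * σ t₀ j - (G t₀)⁻¹ i j * σ t₀ k + c' / c t₀ * σ t₀ i := by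
    rw [hrow i, hσi t₀ j, hσi t₀ k, hσi t₀ i, ← hA]
    field_simp
    ring
  rwa [hval] at hmain
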